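/- Let p be a prime number with p ≡ 2 (mod 5) or p ≡ 3 (mod 5), and let v₀, v₁ ∈ F_p. Then the number of pairs (u, w) ∈ F_p² with w² = P_{(v₀,v₁)}(u) equals p. (Equivalently, the projective genus-2 curve C_{(v₀:v₁)} : w² = P_{(v₀,v₁)}(u) over F_p has exactly p + 1 rational points, exactly one of which lies at infinity.) -/

import Mathlib

/-- The quintic polynomial `P_{(v₀,v₁)}` from the proof of Lemma 6.4 of the paper,
defined over any field in which the displayed divisions by `5` and `25` make sense. -/
def Pquintic {K : Type*} [Field K] (v₀ v₁ u : K) : K :=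
  u ^ 5 + (-v₀ + v₁) * u ^ 4
    + ((3 * v₀ ^ 2 - 6 * v₀ * v₁ - 2 * v₁ ^ 2) / 5) * u ^ 3
    + ((-v₀ ^ 3 + 3 * v₀ ^ 2 * v₁ - 2 * v₁ ^ 3) / 5) * u ^ 2
    + ((v₀ ^ 4 - 4 * v₀ ^ 3 * v₁ + v₀ ^ 2 * v₁ ^ 2 + 6 * v₀ * v₁ ^ 3 + v₁ ^ 4) / 25) * u
    + (v₀ ^ 4 * v₁ + v₀ ^ 3 * v₁ ^ 2 + v₀ ^ 2 * v₁ ^ 3 + v₀ * v₁ ^ 4 + v₁ ^ 5) / 25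


private lemma pow5_inj {F : Type*} [Field F] [Finite F] (hc : (Nat.card F - 1) % 5 ≠ 0) :
    Function.Injective fun x : F => x ^ 5 := by
  have hdvd : ¬ (5 ∣ Nat.card F - 1) := fun h => hc (Nat.mod_eq_zero_of_dvd h)
  have hcop : (Nat.card Fˣ).Coprime 5 := by
    rw [Nat.card_units]
    exact Nat.coprime_comm.mp (((by norm_num : Nat.Prime 5).coprime_iff_not_dvd).mpr hdvd)
  intro x y h
  simp only at h
  rcases eq_or_ne x 0 with rfl | hx
  · have : y ^ 5 = 0 := by rw [← h]; simp
    simpa using pow_eq_zero_iff (n := 5) (by norm_num) |>.mp this |>.symm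
  · have hy : y ≠ 0 := by
      intro hy; rw [hy] at h; simp at h; exact hx h
    have := (powCoprime hcop).injective (a₁ := Units.mk0 x hx) (a₂ := Units.mk0 y hy)
      (by ext; simpa [powCoprime] using h)
    simpa [Units.ext_iff] using this

private lemma count_of_injective (p : ℕ) [Fact p.Prime] {f : ZMod p → ZMod p}
    (hf : Function.Injective f) :
    Set.ncard {q : ZMod p × ZMod p | q.2 ^ 2 = f q.1} = p := by
  have hb : Function.Bijective f := Finite.injective_iff_bijective.mp hf
  let e := Equiv.ofBijective f hb
  have he : ({q : ZMod p × ZMod p | q.2 ^ 2 = f q.1} : Set _) ≃ ZMod p :=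
    { toFun := fun q => q.1.2
      invFun := fun w => ⟨(e.symm (w ^ 2), w), (e.apply_symm_apply (w ^ 2)).symm⟩
      left_inv := fun q => by
        obtain ⟨⟨u, w⟩, h⟩ := q
        have h' : w ^ 2 = f u := h
        simp only [Subtype.mk.injEq, Prod.mk.injEq]
        exact Subtype.ext (Prod.ext (show e.symm (w ^ 2) = u by rw [h']; exact e.symm_apply_apply u) rfl)
      right_inv := fun w => rfl }
  rw [← Nat.card_coe_set_eq, Nat.card_congr he, Nat.card_zmod]

private lemma exists_sqrt (p : ℕ) [hpp : Fact p.Prime] (hp2 : p ≠ 2) (c : ZMod p) :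
    ∃ r : GaloisField p 2, r ^ 2 = algebraMap (ZMod p) (GaloisField p 2) c := by
  rcases eq_or_ne c 0 with rfl | hc
  · exact ⟨0, by simp⟩
  set K := GaloisField p 2
  set ψ := algebraMap (ZMod p) K
  have hinj : Function.Injective ψ := ψ.injective
  have ha : ψ c ≠ 0 := fun h => hc (hinj (by simpa using h))
  haveI : Fintype K := Fintype.ofFinite K
  have hcard : Fintype.card K = p ^ 2 := by
    rw [← Nat.card_eq_fintype_card]; exact GaloisField.card p 2 (by norm_num)
  have hchar : ringChar K ≠ 2 := by
    rw [ringChar.eq K p]; exact hp2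
  have hodd : p % 2 = 1 := (Nat.Prime.eq_two_or_odd hpp.out).resolve_left hp2
  obtain ⟨k, hk⟩ : ∃ k, p = 2 * k + 1 := ⟨p / 2, by omega⟩
  have hdiv : p ^ 2 / 2 = (p - 1) * ((p + 1) / 2) := by
    subst hk
    have h1 : (2 * k + 1) ^ 2 = (2 * k * (k + 1)) * 2 + 1 := by ring
    have h2 : (2 * k + 1 - 1) * ((2 * k + 1 + 1) / 2) = 2 * k * (k + 1) := by
      simp; ring_nf; omega
    rw [h1, h2]; omega
  have hpow1 : (ψ c) ^ (p - 1) = 1 := by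
    rw [← map_pow, ZMod.pow_card_sub_one_eq_one hc, map_one]
  have hpow : (ψ c) ^ (Fintype.card K / 2) = 1 := by
    rw [hcard, hdiv, pow_mul, hpow1, one_pow]
  obtain ⟨y, hy⟩ := (FiniteField.isSquare_iff hchar ha).mpr hpow
  exact ⟨y, by rw [hy]; ring⟩
private lemma dickson_inj (p : ℕ) [hpp : Fact p.Prime] (hp : p % 5 = 2 ∨ p % 5 = 3)
    (hp2 : p ≠ 2) (a : ZMod p) :
    Function.Injective fun x : ZMod p => x ^ 5 + a * x ^ 3 + a ^ 2 / 5 * x := by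
  have hp5 : p ≠ 5 := by rcases hp with h | h <;> omega
  have hK : GaloisField p 2 = GaloisField p 2 := rfl
  set ψ := algebraMap (ZMod p) (GaloisField p 2) with hψdef
  have hinj : Function.Injective ψ := ψ.injective
  have hcardK : Nat.card (GaloisField p 2) = p ^ 2 := GaloisField.card p 2 (by norm_num)
  have hcoprime : (Nat.card (GaloisField p 2) - 1) % 5 ≠ 0 := by
    rw [hcardK]
    have : p ^ 2 % 5 = (p % 5) ^ 2 % 5 := Nat.pow_mod p 2 5
    have hp2' : 2 ≤ p := hpp.out.two_le
    rcases hp with h | h <;> rw [h] at this <;> omega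
  have hpow : Function.Injective fun x : (GaloisField p 2) => x ^ 5 := pow5_inj hcoprime
  have h5p : (5 : ZMod p) ≠ 0 := by
    intro h
    have : (p : ℕ) ∣ 5 := by
      have := (ZMod.natCast_eq_zero_iff 5 p).mp (by exact_mod_cast h)
      exact this
    rcases (Nat.prime_dvd_prime_iff_eq hpp.out (by norm_num)).mp this with rfl
    exact hp5 rfl
  have h5K : (5 : (GaloisField p 2)) ≠ 0 := by
    intro h; exact h5p (hinj (by simp only [map_ofNat, map_zero]; exact h))
  have h2K : (2 : (GaloisField p 2)) ≠ 0 := by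
    have : ((2 : ℕ) : (GaloisField p 2)) ≠ 0 := by
      rw [Ne, CharP.cast_eq_zero_iff (GaloisField p 2) p 2]
      intro h; rcases (Nat.prime_dvd_prime_iff_eq hpp.out (by norm_num)).mp h with rfl
      exact hp2 rfl
    simpa using this
  intro x y hxy
  simp only at hxy
  -- the Dickson parameter
  set A : (GaloisField p 2) := ψ a with hA
  set β : (GaloisField p 2) := -A / 5 with hβdef
  -- map the hypothesis to (GaloisField p 2)
  have hmap : (ψ x) ^ 5 + A * (ψ x) ^ 3 + A ^ 2 / 5 * (ψ x)
      = (ψ y) ^ 5 + A * (ψ y) ^ 3 + A ^ 2 / 5 * (ψ y) := by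
    have := congrArg ψ hxy
    simpa [map_add, map_mul, map_pow, map_div₀, map_ofNat] using this
  rcases eq_or_ne a 0 with rfl | ha
  · -- pure fifth power case
    have hA0 : A = 0 := by simp [hA]
    have : (ψ x) ^ 5 = (ψ y) ^ 5 := by simpa [hA0] using hmap
    exact hinj (hpow this)
  · have hβ : β ≠ 0 := by
      rw [hβdef]
      refine div_ne_zero ?_ h5K
      simp only [neg_ne_zero, hA]
      exact fun h => ha (hinj (by simpa using h))
    -- get s with s * (ψ x - s) = β
    obtain ⟨r, hr⟩ := exists_sqrt p hp2 (x ^ 2 - 4 * (-a / 5))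
    obtain ⟨r', hr'⟩ := exists_sqrt p hp2 (y ^ 2 - 4 * (-a / 5))
    have hrK : r ^ 2 = (ψ x) ^ 2 - 4 * β := by
      rw [hr]; simp [map_sub, map_mul, map_pow, map_div₀, map_ofNat, map_neg, hβdef, hA]; rfl
    have hrK' : r' ^ 2 = (ψ y) ^ 2 - 4 * β := by
      rw [hr']; simp [map_sub, map_mul, map_pow, map_div₀, map_ofNat, map_neg, hβdef, hA]; rfl
    set s : (GaloisField p 2) := (ψ x + r) / 2 with hs_def
    set t : (GaloisField p 2) := (ψ y + r') / 2 with ht_def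
    have hs : s * (ψ x - s) = β := by
      rw [hs_def]; field_simp; linear_combination (-1 : (GaloisField p 2)) * hrK
    have ht : t * (ψ y - t) = β := by
      rw [ht_def]; field_simp; linear_combination (-1 : (GaloisField p 2)) * hrK'
    have hs0 : s ≠ 0 := fun h => hβ (by rw [← hs, h, zero_mul])
    have ht0 : t ≠ 0 := fun h => hβ (by rw [← ht, h, zero_mul])
    have hxs : ψ x = s + β / s := by
      field_simp
      linear_combination hs
    have hyt : ψ y = t + β / t := by
      field_simp
      linear_combination ht
    have hA5 : A = -5 * β := by rw [hβdef]; field_simp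
    have hDx : (ψ x) ^ 5 + A * (ψ x) ^ 3 + A ^ 2 / 5 * (ψ x) = s ^ 5 + β ^ 5 / s ^ 5 := by
      rw [hxs, hA5]; field_simp; ring
    have hDy : (ψ y) ^ 5 + A * (ψ y) ^ 3 + A ^ 2 / 5 * (ψ y) = t ^ 5 + β ^ 5 / t ^ 5 := by
      rw [hyt, hA5]; field_simp; ring
    have hst : s ^ 5 + β ^ 5 / s ^ 5 = t ^ 5 + β ^ 5 / t ^ 5 := by
      rw [← hDx, ← hDy]; exact hmap
    have hfac : (s ^ 5 - t ^ 5) * (s ^ 5 * t ^ 5 - β ^ 5) = 0 := by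
      have h' := hst
      field_simp at h'
      linear_combination h'
    rcases mul_eq_zero.mp hfac with h | h
    · have : s = t := hpow (by simpa using sub_eq_zero.mp h)
      apply hinj; rw [hxs, hyt, this]
    · have hstβ : (s * t) ^ 5 = β ^ 5 := by rw [mul_pow]; linear_combination h
      have : s * t = β := hpow hstβ
      apply hinj
      rw [hxs, hyt]
      have htval : t = β / s := by field_simp; linear_combination this
      rw [htval]
      field_simp
      ring

private lemma pq2_key : ∀ a b x y : ZMod 2,
    x ^ 5 + (-a + b) * x ^ 4 + (3 * a ^ 2 - 6 * a * b - 2 * b ^ 2) * x ^ 3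
      + (-a ^ 3 + 3 * a ^ 2 * b - 2 * b ^ 3) * x ^ 2
      + (a ^ 4 - 4 * a ^ 3 * b + a ^ 2 * b ^ 2 + 6 * a * b ^ 3 + b ^ 4) * x
      + (a ^ 4 * b + a ^ 3 * b ^ 2 + a ^ 2 * b ^ 3 + a * b ^ 4 + b ^ 5)
    = y ^ 5 + (-a + b) * y ^ 4 + (3 * a ^ 2 - 6 * a * b - 2 * b ^ 2) * y ^ 3
      + (-a ^ 3 + 3 * a ^ 2 * b - 2 * b ^ 3) * y ^ 2
      + (a ^ 4 - 4 * a ^ 3 * b + a ^ 2 * b ^ 2 + 6 * a * b ^ 3 + b ^ 4) * y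
      + (a ^ 4 * b + a ^ 3 * b ^ 2 + a ^ 2 * b ^ 3 + a * b ^ 4 + b ^ 5)
    → x = y := by decide

private lemma pquintic_inj_two (v₀ v₁ : ZMod 2) :
    Function.Injective (Pquintic v₀ v₁) := by
  intro x y h
  have h5 : (5 : ZMod 2) = 1 := by decide
  have h25 : (25 : ZMod 2) = 1 := by decide
  unfold Pquintic at h
  rw [h5, h25] at h
  simp only [div_one] at h
  exact pq2_key v₀ v₁ x y h

private lemma pquintic_inj (p : ℕ) [hpp : Fact p.Prime] (hp : p % 5 = 2 ∨ p % 5 = 3)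
    (v₀ v₁ : ZMod p) : Function.Injective (Pquintic v₀ v₁) := by
  by_cases hp2 : p = 2
  · subst hp2
    exact pquintic_inj_two v₀ v₁
  · have hp5 : p ≠ 5 := by rcases hp with h | h <;> omega
    have h5 : (5 : ZMod p) ≠ 0 := by
      intro h
      have hdvd : (p : ℕ) ∣ 5 := (ZMod.natCast_eq_zero_iff 5 p).mp (by exact_mod_cast h)
      rcases (Nat.prime_dvd_prime_iff_eq hpp.out (by norm_num)).mp hdvd with rfl
      exact hp5 rfl
    set i : ZMod p := (5 : ZMod p)⁻¹ with hi
    have h5i : (5 : ZMod p) * i = 1 := mul_inv_cancel₀ h5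
    set a : ZMod p := (v₀ ^ 2 - 2 * v₀ * v₁ - 4 * v₁ ^ 2) * i with ha
    set t : ZMod p := (v₁ - v₀) * i with ht
    set C : ZMod p := (11 * v₀ ^ 5 + 70 * v₀ ^ 4 * v₁ + 160 * v₀ ^ 3 * v₁ ^ 2
      + 240 * v₀ ^ 2 * v₁ ^ 3 + 80 * v₀ * v₁ ^ 4 + 64 * v₁ ^ 5) * i ^ 5 with hC
    have hP : ∀ u : ZMod p, Pquintic v₀ v₁ u
        = ((u + t) ^ 5 + a * (u + t) ^ 3 + a ^ 2 / 5 * (u + t)) + C := by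
      intro u
      unfold Pquintic
      simp only [div_eq_mul_inv, ha, ht, hC,
        show (25 : ZMod p)⁻¹ = i ^ 2 from by
          rw [hi, show (25 : ZMod p) = 5 ^ 2 from by norm_num, ← inv_pow], ← hi]
      linear_combination (-13*v₁^5*i^4 - 15*v₀*v₁^4*i^4 - 50*v₀^2*v₁^3*i^4 - 30*v₀^3*v₁^2*i^4 - 15*v₀^4*v₁*i^4 - 2*v₀^5*i^4 - 5*v₁^5*i^3 - 5*v₀*v₁^4*i^3 - 5*v₀^2*v₁^3*i^3 - 5*v₀^3*v₁^2*i^3 - 5*v₀^4*v₁*i^3 - 1*u*v₁^4*i^3 + 4*u*v₀*v₁^3*i^3 - 6*u*v₀^2*v₁^2*i^3 + 4*u*v₀^3*v₁*i^3 - 1*u*v₀^4*i^3 - 1*v₁^5*i^2 - 1*v₀*v₁^4*i^2 - 1*v₀^2*v₁^3*i^2 - 1*v₀^3*v₁^2*i^2 - 1*v₀^4*v₁*i^2 - 1*u*v₁^4*i^2 - 6*u*v₀*v₁^3*i^2 - 1*u*v₀^2*v₁^2*i^2 + 4*u*v₀^3*v₁*i^2 - 1*u*v₀^4*i^2 - 2*u^2*v₁^3*i^2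 + 6*u^2*v₀*v₁^2*i^2 - 6*u^2*v₀^2*v₁*i^2 + 2*u^2*v₀^3*i^2 + 2*u^2*v₁^3*i - 3*u^2*v₀^2*v₁*i + u^2*v₀^3*i - 2*u^3*v₁^2*i + 4*u^3*v₀*v₁*i - 2*u^3*v₀^2*i - 1*u^4*v₁ + u^4*v₀) * h5i
    intro x y h
    rw [hP x, hP y] at h
    have h2 := add_right_cancel h
    have h3 := dickson_inj p hp hp2 a h2
    exact add_right_cancel h3

/-- Point count of the fibre curves in the proof of Lemma 6.4 (Qw5_count): for a prime
`p ≡ 2, 3 (mod 5)` and `v₀, v₁ ∈ F_p`, the number of pairs `(u, w) ∈ F_p²` with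
`w² = P_{(v₀,v₁)}(u)` equals `p`. -/
theorem fibre_curve_point_count (p : ℕ) [Fact p.Prime] (hp : p % 5 = 2 ∨ p % 5 = 3)
    (v₀ v₁ : ZMod p) :
    Set.ncard {q : ZMod p × ZMod p | q.2 ^ 2 = Pquintic v₀ v₁ q.1} = p :=
  count_of_injective p (pquintic_inj p hp v₀ v₁)
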